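/- For every n ≥ 0, p_od^ed(n) − p_ed^od(n) equals the number of partitions λ counted by p_od^ed(n) that contain both an even and an odd part and whose smallest even part exceeds the largest odd part by exactly 1. -/

import Mathlib

/-- Every odd part is greater than every even part. -/
def oddAbove (l : Multiset ℕ) : Prop :=
  ∀ a ∈ l, ∀ b ∈ l, Odd a → Even b → b < a

/-- Every even part is greater than every odd part. -/
def evenAbove (l : Multiset ℕ) : Prop :=
  ∀ a ∈ l, ∀ b ∈ l, Even a → Odd b → b < a

/-- The odd parts are distinct. -/
def oddDistinct (l : Multiset ℕ) : Prop :=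
  ∀ a, Odd a → l.count a ≤ 1

/-- The even parts are distinct. -/
def evenDistinct (l : Multiset ℕ) : Prop :=
  ∀ a, Even a → l.count a ≤ 1

/-- The number of partitions of `n` whose multiset of parts satisfies `P`. -/
noncomputable def pcount (n : ℕ) (P : Multiset ℕ → Prop) : ℕ :=
  Nat.card {p : Nat.Partition n // P p.parts}

/-- The smallest even part of `l` exceeds the largest odd part of `l` by exactly `1`
    (in particular `l` contains parts of both parities). -/
def minEvenEqMaxOddPlusOne (l : Multiset ℕ) : Prop :=
  ∃ a ∈ l, ∃ b ∈ l, Even a ∧ Odd b ∧ (∀ c ∈ l, Even c → a ≤ c) ∧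
    (∀ c ∈ l, Odd c → c ≤ b) ∧ a = b + 1

namespace Stmt7Aux

def pf (a b : ℕ) : ℕ :=
  if a % 2 = 1 ∧ b % 2 = 0 then a + 1 else if a % 2 = 0 ∧ b % 2 = 1 then a - 1 else a

def T (l : List ℕ) : List ℕ := List.zipWith pf l l.reverse

lemma length_T (l : List ℕ) : (T l).length = l.length := by
  simp [T]

lemma getElem_T (l : List ℕ) (i : ℕ) (h : i < (T l).length) :
    (T l)[i] = pf (l[i]'(by simpa [length_T] using h))
      (l[l.length - 1 - i]'(by rw [length_T] at h; omega)) := by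
  simp only [T, List.getElem_zipWith]
  congr 1
  rw [List.getElem_reverse]

lemma pf_pf {a b : ℕ} (ha : 0 < a) (hb : 0 < b) : pf (pf a b) (pf b a) = a := by
  rcases Nat.mod_two_eq_zero_or_one a with ha' | ha' <;>
    rcases Nat.mod_two_eq_zero_or_one b with hb' | hb' <;>
    simp only [pf] <;> split_ifs <;> omega

lemma T_T {l : List ℕ} (hpos : ∀ a ∈ l, 0 < a) : T (T l) = l := by
  apply List.ext_getElem (by simp [length_T])
  intro i h1 h2
  simp only [getElem_T, length_T]
  have e : l.length - 1 - (l.length - 1 - i) = i := by omega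
  simp_rw [e]
  exact pf_pf (hpos _ (List.getElem_mem _)) (hpos _ (List.getElem_mem _))

lemma pf_pos {a b : ℕ} (ha : 0 < a) : 0 < pf a b := by
  simp only [pf]; split_ifs <;> omega

lemma pos_T {l : List ℕ} (h : ∀ a ∈ l, 0 < a) : ∀ a ∈ T l, 0 < a := by
  intro a hal
  rw [List.mem_iff_getElem] at hal
  obtain ⟨i, hi, rfl⟩ := hal
  rw [getElem_T]
  exact pf_pos (h _ (List.getElem_mem _))

lemma pf_add {a b : ℕ} (ha : 0 < a) (hb : 0 < b) : pf a b + pf b a = a + b := by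
  simp only [pf]; split_ifs <;> omega

lemma sum_zip_aux : ∀ (l1 l2 : List ℕ), l1.length = l2.length →
    (∀ a ∈ l1, 0 < a) → (∀ a ∈ l2, 0 < a) →
    (List.zipWith pf l1 l2).sum + (List.zipWith pf l2 l1).sum = l1.sum + l2.sum := by
  intro l1
  induction l1 with
  | nil =>
    intro l2 hlen _ _
    rw [List.length_nil] at hlen
    rw [List.length_eq_zero_iff.mp hlen.symm]
    simp
  | cons a l ih =>
    intro l2 hlen h1 h2
    cases l2 with
    | nil => simp at hlen
    | cons b l2' =>
      simp only [List.zipWith_cons_cons, List.sum_cons]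
      have := ih l2' (by simpa using hlen) (fun x hx => h1 x (by simp [hx]))
        (fun x hx => h2 x (by simp [hx]))
      have hab := pf_add (h1 a (by simp)) (h2 b (by simp))
      omega

lemma reverse_T (l : List ℕ) : (T l).reverse = List.zipWith pf l.reverse l := by
  apply List.ext_getElem (by simp [length_T])
  intro i h1 h2
  have hi : i < l.length := by simpa [length_T] using h1
  rw [List.getElem_reverse]
  simp only [getElem_T, length_T, List.getElem_zipWith, List.getElem_reverse]
  have e : l.length - 1 - (l.length - 1 - i) = i := by omega
  simp_rw [e]

lemma sum_T {l : List ℕ} (h : ∀ a ∈ l, 0 < a) : (T l).sum = l.sum := by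
  have h2 : ∀ a ∈ l.reverse, 0 < a := fun a ha => h a (List.mem_reverse.mp ha)
  have key := sum_zip_aux l l.reverse (by simp) h h2
  have h3 : (T l).reverse.sum = (List.zipWith pf l.reverse l).sum := by rw [reverse_T]
  rw [List.sum_reverse] at h3
  have hsr : l.reverse.sum = l.sum := List.sum_reverse l
  simp only [T] at *
  omega


/-! ### Pattern lemmas -/

lemma sep_patt : ∀ (l : List ℕ) (v : ℕ), l.Pairwise (· < ·) →
    (∀ a ∈ l, ∀ b ∈ l, a % 2 = v → b % 2 ≠ v → a < b) →
    ∃ j ≤ l.length, ∀ i (h : i < l.length), l[i] % 2 = v ↔ i < j := by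
  intro l
  induction l with
  | nil => exact fun v _ _ => ⟨0, by simp, fun i h => by simp at h⟩
  | cons x xs ih =>
    intro v hs hsep
    have hs' := List.pairwise_cons.mp hs
    by_cases hx : x % 2 = v
    · obtain ⟨j, hj, hp⟩ := ih v hs'.2
        (fun a ha b hb => hsep a (List.mem_cons_of_mem _ ha) b (List.mem_cons_of_mem _ hb))
      refine ⟨j + 1, by simp; omega, ?_⟩
      intro i h
      cases i with
      | zero => simpa using hx
      | succ i =>
        have := hp i (by simpa using h)
        simpa using this
    · refine ⟨0, by simp, ?_⟩
      intro i h
      simp only [Nat.not_lt_zero, iff_false]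
      cases i with
      | zero => simpa using hx
      | succ i =>
        intro hcon
        have hi : i < xs.length := by simpa using h
        have hmem : xs[i] ∈ xs := List.getElem_mem _
        have h1 := hsep _ (List.mem_cons_of_mem _ hmem) x List.mem_cons_self
          (by simpa using hcon) hx
        have h2 := hs'.1 _ hmem
        omega

lemma sorted_pair {l : List ℕ} (hs : l.Pairwise (· < ·)) {i i' : ℕ} (h : i < i')
    (h' : i' < l.length) : l[i]'(by omega) < l[i'] := by
  exact List.pairwise_iff_getElem.mp hs i i' (by omega) h' h

/-! ### Direction 2 : odds-first (evenAbove) with gap hypothesis, to evens-first -/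

section Dir
variable {l : List ℕ} {k : ℕ}

/-- Direction 2 sortedness: input odds-first with a boundary gap of ≥ 3. -/
lemma D2_sorted (hs : l.Pairwise (· < ·)) (hpos : ∀ a ∈ l, 0 < a) (hk : k ≤ l.length)
    (hp : ∀ i (h : i < l.length), l[i] % 2 = 1 ↔ i < k)
    (hgap : ∀ i (h : i + 1 < l.length), i + 1 = k → l[i] + 3 ≤ l[i+1]) :
    (T l).Pairwise (· < ·) := by
  rw [← List.isChain_iff_pairwise, List.isChain_iff_getElem]
  intro i h
  rw [length_T] at h
  have h' : i + 1 < l.length := by omega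
  rw [getElem_T, getElem_T]
  have f1 : l[i]'(by omega) < l[i+1]'(by omega) := sorted_pair hs (by omega) h'
  have pi := hp i (by omega)
  have pi1 := hp (i+1) h' 
  have pmi := hp (l.length - 1 - i) (by omega)
  have pmi1 := hp (l.length - 1 - (i+1)) (by omega)
  have qi : 0 < l[i]'(by omega) := hpos _ (List.getElem_mem _)
  have qi1 : 0 < l[i+1]'(by omega) := hpos _ (List.getElem_mem _)
  have hg := hgap i h'
  simp only [pf]
  split_ifs <;> omega

/-- Direction 2 image pattern. -/
lemma D2_patt (hpos : ∀ a ∈ l, 0 < a) (hk : k ≤ l.length)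
    (hp : ∀ i (h : i < l.length), l[i] % 2 = 1 ↔ i < k) :
    ∀ i (h : i < (T l).length), (T l)[i] % 2 = 0 ↔ i < l.length - k := by
  intro i h
  rw [length_T] at h
  rw [getElem_T]
  have pi := hp i (by omega)
  have pmi := hp (l.length - 1 - i) (by omega)
  have qi : 0 < l[i]'(by omega) := hpos _ (List.getElem_mem _)
  simp only [pf]
  split_ifs <;> omega

/-! ### Direction 1 : evens-first (oddAbove), no gap hypothesis -/

lemma D1_sorted (hs : l.Pairwise (· < ·)) (hpos : ∀ a ∈ l, 0 < a) (hk : k ≤ l.length)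
    (hp : ∀ i (h : i < l.length), l[i] % 2 = 0 ↔ i < k) :
    (T l).Pairwise (· < ·) := by
  rw [← List.isChain_iff_pairwise, List.isChain_iff_getElem]
  intro i h
  rw [length_T] at h
  have h' : i + 1 < l.length := by omega
  rw [getElem_T, getElem_T]
  have f1 : l[i]'(by omega) < l[i+1]'(by omega) := sorted_pair hs (by omega) h'
  have pi := hp i (by omega)
  have pi1 := hp (i+1) h' 
  have pmi := hp (l.length - 1 - i) (by omega)
  have pmi1 := hp (l.length - 1 - (i+1)) (by omega)
  have qi : 0 < l[i]'(by omega) := hpos _ (List.getElem_mem _)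
  have qi1 : 0 < l[i+1]'(by omega) := hpos _ (List.getElem_mem _)
  simp only [pf]
  split_ifs <;> omega

lemma D1_patt (hpos : ∀ a ∈ l, 0 < a) (hk : k ≤ l.length)
    (hp : ∀ i (h : i < l.length), l[i] % 2 = 0 ↔ i < k) :
    ∀ i (h : i < (T l).length), (T l)[i] % 2 = 1 ↔ i < l.length - k := by
  intro i h
  rw [length_T] at h
  rw [getElem_T]
  have pi := hp i (by omega)
  have pmi := hp (l.length - 1 - i) (by omega)
  have qi : 0 < l[i]'(by omega) := hpos _ (List.getElem_mem _)
  simp only [pf]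
  split_ifs <;> omega

/-- Direction 1 image gap: the image has a gap of at least 2 at the parity boundary. -/
lemma D1_gap (hs : l.Pairwise (· < ·)) (hpos : ∀ a ∈ l, 0 < a) (hk : k ≤ l.length)
    (hp : ∀ i (h : i < l.length), l[i] % 2 = 0 ↔ i < k) :
    ∀ i (h : i + 1 < (T l).length), i + 1 = l.length - k →
      (T l)[i] + 2 ≤ (T l)[i+1] := by
  intro i h hb
  rw [length_T] at h
  rw [getElem_T, getElem_T]
  have f1 : l[i]'(by omega) < l[i+1]'(by omega) := sorted_pair hs (by omega) h
  have pi := hp i (by omega)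
  have pi1 := hp (i+1) h
  have pmi := hp (l.length - 1 - i) (by omega)
  have pmi1 := hp (l.length - 1 - (i+1)) (by omega)
  have qi : 0 < l[i]'(by omega) := hpos _ (List.getElem_mem _)
  have qi1 : 0 < l[i+1]'(by omega) := hpos _ (List.getElem_mem _)
  simp only [pf]
  split_ifs <;> omega

end Dir


/-! ### Transfer lemmas -/


lemma sorted_le {l : List ℕ} (hs : l.Pairwise (· < ·)) {i i' : ℕ} (h : i ≤ i')
    (h' : i' < l.length) : l[i]'(by omega) ≤ l[i'] := by
  rcases Nat.lt_or_ge i i' with hlt | hge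
  · exact le_of_lt (sorted_pair hs hlt h')
  · have hii : i = i' := by omega
    subst hii
    exact le_refl _

/-- From a pattern (parity `v` exactly on an initial segment) and sortedness, every element of
the "wrong" parity exceeds every element of parity `v`. -/
lemma above_of_patt {l : List ℕ} {v j : ℕ} (hs : l.Pairwise (· < ·))
    (hp : ∀ i (h : i < l.length), l[i] % 2 = v ↔ i < j) :
    ∀ a ∈ l, ∀ b ∈ l, a % 2 ≠ v → b % 2 = v → b < a := by
  intro a ha b hb hav hbv
  rw [List.mem_iff_getElem] at ha hb
  obtain ⟨ia, hia, rfl⟩ := ha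
  obtain ⟨ib, hib, rfl⟩ := hb
  have h1 := hp ia hia
  have h2 := hp ib hib
  have : ib < ia := by omega
  exact sorted_pair hs this hia

/-- From failure of the boundary condition, derive the gap `≥ 3` (input side, evenAbove). -/
lemma gap_of_not_sp {l : List ℕ} {k : ℕ} (hs : l.Pairwise (· < ·))
    (hp : ∀ i (h : i < l.length), l[i] % 2 = 1 ↔ i < k)
    (hns : ¬ minEvenEqMaxOddPlusOne ↑l) :
    ∀ i (h : i + 1 < l.length), i + 1 = k → l[i] + 3 ≤ l[i+1] := by
  intro i h hik
  by_contra hcon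
  have pi : l[i]'(by omega) % 2 = 1 := by have := hp i (by omega); omega
  have pi1 : l[i+1] % 2 = 0 := by have := hp (i+1) h; omega
  have hlt : l[i]'(by omega) < l[i+1] := sorted_pair hs (by omega) h
  have heq : l[i+1] = l[i]'(by omega) + 1 := by omega
  apply hns
  refine ⟨l[i+1], Multiset.mem_coe.mpr (List.getElem_mem _),
    l[i]'(by omega), Multiset.mem_coe.mpr (List.getElem_mem _),
    Nat.even_iff.mpr pi1, Nat.odd_iff.mpr pi, ?_, ?_, heq⟩
  · intro c hc hce
    rw [Multiset.mem_coe, List.mem_iff_getElem] at hc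
    obtain ⟨ic, hic, rfl⟩ := hc
    have pc := hp ic hic
    have hce' : l[ic] % 2 = 0 := Nat.even_iff.mp hce
    have hle : i + 1 ≤ ic := by omega
    exact sorted_le hs hle hic
  · intro c hc hco
    rw [Multiset.mem_coe, List.mem_iff_getElem] at hc
    obtain ⟨ic, hic, rfl⟩ := hc
    have pc := hp ic hic
    have hco' : l[ic] % 2 = 1 := Nat.odd_iff.mp hco
    have hle : ic ≤ i := by omega
    exact sorted_le hs hle (by omega)

/-- From the image gap `≥ 2`, the boundary condition fails (image side, evenAbove pattern). -/
lemma not_sp_of_gap {l : List ℕ} {k : ℕ} (hs : l.Pairwise (· < ·))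
    (hp : ∀ i (h : i < l.length), l[i] % 2 = 1 ↔ i < k)
    (hgap : ∀ i (h : i + 1 < l.length), i + 1 = k → l[i] + 2 ≤ l[i+1]) :
    ¬ minEvenEqMaxOddPlusOne ↑l := by
  rintro ⟨a, ha, b, hb, hae, hbo, hmin, hmax, heq⟩
  rw [Multiset.mem_coe, List.mem_iff_getElem] at ha hb
  obtain ⟨ia, hia, rfl⟩ := ha
  obtain ⟨ib, hib, rfl⟩ := hb
  have pa : l[ia] % 2 = 0 := Nat.even_iff.mp hae
  have pb : l[ib] % 2 = 1 := Nat.odd_iff.mp hbo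
  have hiak : k ≤ ia := by have := hp ia hia; omega
  have hibk : ib < k := by have := hp ib hib; omega
  obtain ⟨m, rfl⟩ : ∃ m, k = m + 1 := ⟨k - 1, by omega⟩
  have hkr : m + 1 < l.length := by omega
  have h1 : l[m+1] ≤ l[ia] := sorted_le hs hiak hia
  have h2 : l[ia] ≤ l[m+1] := by
    apply hmin
    · exact Multiset.mem_coe.mpr (List.getElem_mem _)
    · have := hp (m+1) hkr
      exact Nat.even_iff.mpr (by omega)
  have h3 : l[ib] ≤ l[m]'(by omega) := sorted_le hs (by omega) (by omega)
  have h4 : l[m]'(by omega) ≤ l[ib] := by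
    apply hmax
    · exact Multiset.mem_coe.mpr (List.getElem_mem _)
    · have := hp m (by omega)
      exact Nat.odd_iff.mpr (by omega)
  have h5 := hgap m hkr rfl
  omega

/-! ### Partition-level -/

/-- The parts of a partition, sorted ascending. -/
def sortedParts {n : ℕ} (p : n.Partition) : List ℕ := Multiset.sort p.parts (· ≤ ·)

lemma coe_sortedParts {n : ℕ} (p : n.Partition) : (↑(sortedParts p) : Multiset ℕ) = p.parts :=
  Multiset.sort_eq _ _

lemma pos_sortedParts {n : ℕ} (p : n.Partition) : ∀ a ∈ sortedParts p, 0 < a := by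
  intro a ha
  exact p.parts_pos (by rw [← coe_sortedParts p]; exact Multiset.mem_coe.mpr ha)

lemma sorted_lt_sortedParts {n : ℕ} (p : n.Partition) (h : p.parts.Nodup) :
    (sortedParts p).Pairwise (· < ·) := by
  have h1 : (sortedParts p).Pairwise (· ≤ ·) := Multiset.pairwise_sort _ _
  have h2 : (sortedParts p).Nodup := by
    rw [← Multiset.coe_nodup, coe_sortedParts]; exact h
  exact (h1.and h2).imp (fun ⟨a, b⟩ => lt_of_le_of_ne a b)

/-- The transform at the level of partitions. -/
def Tpart {n : ℕ} (p : n.Partition) : n.Partition where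
  parts := ↑(T (sortedParts p))
  parts_pos := by
    intro a ha
    rw [Multiset.mem_coe] at ha
    exact pos_T (pos_sortedParts p) a ha
  parts_sum := by
    rw [Multiset.sum_coe, sum_T (pos_sortedParts p)]
    rw [← Multiset.sum_coe, coe_sortedParts]
    exact p.parts_sum

lemma Tpart_parts {n : ℕ} (p : n.Partition) : (Tpart p).parts = ↑(T (sortedParts p)) := rfl

lemma Tpart_Tpart {n : ℕ} (p : n.Partition) (hsT : (T (sortedParts p)).Pairwise (· < ·)) :
    Tpart (Tpart p) = p := by
  have h1 : sortedParts (Tpart p) = T (sortedParts p) := by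
    refine (fun h s1 s2 => List.Perm.eq_of_pairwise' (r := (· ≤ ·)) s1 s2 h) ?_ ?_ ?_
    · apply Multiset.coe_eq_coe.mp
      rw [coe_sortedParts, Tpart_parts]
    · exact Multiset.pairwise_sort _ _
    · exact hsT.imp le_of_lt
  apply Nat.Partition.ext
  rw [Tpart_parts, h1, T_T (pos_sortedParts p), coe_sortedParts]


/-! ### Main lemmas -/

lemma main_EO {n : ℕ} (p : n.Partition) (h1 : p.parts.Nodup) (h2 : oddAbove p.parts) :
    (Tpart p).parts.Nodup ∧ evenAbove (Tpart p).parts ∧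
      ¬ minEvenEqMaxOddPlusOne (Tpart p).parts ∧ Tpart (Tpart p) = p := by
  have hs := sorted_lt_sortedParts p h1
  have hpos := pos_sortedParts p
  have hcoe := coe_sortedParts p
  obtain ⟨k, hk, hp⟩ := sep_patt (sortedParts p) 0 hs (fun a ha b hb pa pb => by
    exact h2 b (by rw [← hcoe]; exact Multiset.mem_coe.mpr hb)
      a (by rw [← hcoe]; exact Multiset.mem_coe.mpr ha)
      (Nat.odd_iff.mpr (by omega)) (Nat.even_iff.mpr pa))
  have hsT := D1_sorted hs hpos hk hp
  have hpT := D1_patt hpos hk hp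
  have hgapT := D1_gap hs hpos hk hp
  refine ⟨?_, ?_, ?_, Tpart_Tpart p hsT⟩
  · rw [Tpart_parts, Multiset.coe_nodup]
    exact hsT.imp ne_of_lt
  · rw [Tpart_parts]
    intro a ha b hb hae hbo
    rw [Multiset.mem_coe] at ha hb
    exact above_of_patt hsT hpT a ha b hb (by have := Nat.even_iff.mp hae; omega)
      (Nat.odd_iff.mp hbo)
  · rw [Tpart_parts]
    exact not_sp_of_gap hsT hpT hgapT

lemma main_OE {n : ℕ} (p : n.Partition) (h1 : p.parts.Nodup) (h2 : evenAbove p.parts)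
    (h3 : ¬ minEvenEqMaxOddPlusOne p.parts) :
    (Tpart p).parts.Nodup ∧ oddAbove (Tpart p).parts ∧ Tpart (Tpart p) = p := by
  have hs := sorted_lt_sortedParts p h1
  have hpos := pos_sortedParts p
  have hcoe := coe_sortedParts p
  obtain ⟨k, hk, hp⟩ := sep_patt (sortedParts p) 1 hs (fun a ha b hb pa pb => by
    exact h2 b (by rw [← hcoe]; exact Multiset.mem_coe.mpr hb)
      a (by rw [← hcoe]; exact Multiset.mem_coe.mpr ha)
      (Nat.even_iff.mpr (by omega)) (Nat.odd_iff.mpr pa))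
  have hns : ¬ minEvenEqMaxOddPlusOne ↑(sortedParts p) := by rw [hcoe]; exact h3
  have hgap := gap_of_not_sp hs hp hns
  have hsT := D2_sorted hs hpos hk hp hgap
  have hpT := D2_patt hpos hk hp
  refine ⟨?_, ?_, Tpart_Tpart p hsT⟩
  · rw [Tpart_parts, Multiset.coe_nodup]
    exact hsT.imp ne_of_lt
  · rw [Tpart_parts]
    intro a ha b hb hao hbe
    rw [Multiset.mem_coe] at ha hb
    exact above_of_patt hsT hpT a ha b hb (by have := Nat.odd_iff.mp hao; omega)
      (Nat.even_iff.mp hbe)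

/-! ### Counting -/

noncomputable def splitEquiv {α : Type*} (P Q : α → Prop) :
    {x // P x} ≃ {x // P x ∧ Q x} ⊕ {x // P x ∧ ¬Q x} := by
  classical
  exact
  { toFun := fun x => if hq : Q x.1 then Sum.inl ⟨x.1, x.2, hq⟩ else Sum.inr ⟨x.1, x.2, hq⟩
    invFun := fun s => Sum.elim (fun y => ⟨y.1, y.2.1⟩) (fun y => ⟨y.1, y.2.1⟩) s
    left_inv := fun x => by by_cases hq : Q x.1 <;> simp [hq]
    right_inv := fun s => by rcases s with ⟨x, hx, hq⟩ | ⟨x, hx, hq⟩ <;> simp [hq] }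

noncomputable def mainEquiv (n : ℕ) :
    {p : n.Partition // p.parts.Nodup ∧ oddAbove p.parts} ≃
    {p : n.Partition // (p.parts.Nodup ∧ evenAbove p.parts) ∧
      ¬ minEvenEqMaxOddPlusOne p.parts} where
  toFun := fun x => ⟨Tpart x.1, by
    obtain ⟨a, b, c, d⟩ := main_EO x.1 x.2.1 x.2.2
    exact ⟨⟨a, b⟩, c⟩⟩
  invFun := fun x => ⟨Tpart x.1, by
    obtain ⟨a, b, c⟩ := main_OE x.1 x.2.1.1 x.2.1.2 x.2.2
    exact ⟨a, b⟩⟩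
  left_inv := fun x => Subtype.ext (main_EO x.1 x.2.1 x.2.2).2.2.2
  right_inv := fun x => Subtype.ext (main_OE x.1 x.2.1.1 x.2.1.2 x.2.2).2.2

theorem key_count (n : ℕ) :
    Nat.card {p : n.Partition // p.parts.Nodup ∧ evenAbove p.parts} =
    Nat.card {p : n.Partition // p.parts.Nodup ∧ evenAbove p.parts ∧
      minEvenEqMaxOddPlusOne p.parts} +
    Nat.card {p : n.Partition // p.parts.Nodup ∧ oddAbove p.parts} := by
  have e1 := splitEquiv (fun p : n.Partition => p.parts.Nodup ∧ evenAbove p.parts)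
    (fun p => minEvenEqMaxOddPlusOne p.parts)
  have e2 : {p : n.Partition // (p.parts.Nodup ∧ evenAbove p.parts) ∧
      minEvenEqMaxOddPlusOne p.parts} ≃
      {p : n.Partition // p.parts.Nodup ∧ evenAbove p.parts ∧
        minEvenEqMaxOddPlusOne p.parts} :=
    Equiv.subtypeEquivRight (fun p => by tauto)
  rw [Nat.card_congr e1, Nat.card_sum, Nat.card_congr e2, Nat.card_congr (mainEquiv n).symm]

end Stmt7Aux

theorem stmt7 (n : ℕ) :
    (pcount n (fun l => l.Nodup ∧ evenAbove l) : ℤ) -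
      pcount n (fun l => l.Nodup ∧ oddAbove l) =
    pcount n (fun l => l.Nodup ∧ evenAbove l ∧ minEvenEqMaxOddPlusOne l) := by
  show ((Nat.card {p : Nat.Partition n // p.parts.Nodup ∧ evenAbove p.parts}) : ℤ) -
      (Nat.card {p : Nat.Partition n // p.parts.Nodup ∧ oddAbove p.parts}) =
    (Nat.card {p : Nat.Partition n // p.parts.Nodup ∧ evenAbove p.parts ∧
      minEvenEqMaxOddPlusOne p.parts})
  rw [Stmt7Aux.key_count n]
  push_cast
  ring
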